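/- Let G be a connected simple graph on n ≥ 2 vertices and let A = (a_{ijk}) be its two-steps tensor. Then the representative matrix M(A) is primitive: there exists a positive integer k such that every entry of the matrix power M(A)^k is strictly positive. (Lemma 2.5) -/
import Mathlib


open Classical in
/-- The two-steps tensor of a simple graph: `a i j k = 1` if `i ~ j` and `j ~ k`, else `0`. -/
noncomputable def twoStepsTensor {n : ℕ} (G : SimpleGraph (Fin n)) :
    Fin n → Fin n → Fin n → ℝ :=
  fun i j k => if G.Adj i j ∧ G.Adj j k then 1 else 0

/-- The representative matrix of a third-order tensor:
`m i j = ∑_{(j₂,j₃), j ∈ {j₂,j₃}} |a i j₂ j₃|`. -/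
noncomputable def repMatrix {n : ℕ} (A : Fin n → Fin n → Fin n → ℝ) :
    Matrix (Fin n) (Fin n) ℝ :=
  fun i j => ∑ p : Fin n × Fin n, if j = p.1 ∨ j = p.2 then |A i p.1 p.2| else 0

lemma repMatrix_nonneg {n : ℕ} (A : Fin n → Fin n → Fin n → ℝ) (i j : Fin n) :
    0 ≤ repMatrix A i j := by
  unfold repMatrix
  refine Finset.sum_nonneg fun p _ => ?_
  positivity

lemma repMatrix_pow_nonneg {n : ℕ} (A : Fin n → Fin n → Fin n → ℝ) (k : ℕ) (i j : Fin n) :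
    0 ≤ ((repMatrix A) ^ k) i j := by
  induction k generalizing i j with
  | zero => simp [Matrix.one_apply]; positivity
  | succ k ih =>
    rw [pow_succ', Matrix.mul_apply]
    exact Finset.sum_nonneg fun m _ => mul_nonneg (repMatrix_nonneg A i m) (ih m j)

lemma exists_adj {n : ℕ} (hn : 2 ≤ n) {G : SimpleGraph (Fin n)} (hG : G.Connected)
    (v : Fin n) : ∃ w : Fin n, G.Adj v w := by
  obtain ⟨u, hu⟩ := Fintype.exists_ne_of_one_lt_card (by simp; omega) v
  obtain ⟨w⟩ := hG v u
  cases w with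
  | nil => exact absurd rfl (Ne.symm hu)
  | cons h q => exact ⟨_, h⟩

lemma repMatrix_pos {n : ℕ} (hn : 2 ≤ n) {G : SimpleGraph (Fin n)} (hG : G.Connected)
    {i j : Fin n} (hij : i = j ∨ G.Adj i j) :
    0 < repMatrix (twoStepsTensor G) i j := by
  unfold repMatrix
  refine Finset.sum_pos' (fun p _ => by positivity) ?_
  rcases hij with rfl | hij
  · obtain ⟨p, hp⟩ := exists_adj hn hG i
    refine ⟨(p, i), Finset.mem_univ _, ?_⟩
    simp only [twoStepsTensor, hp, hp.symm, and_self, if_true, or_true, abs_one]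
    norm_num
  · obtain ⟨p, hp⟩ := exists_adj hn hG j
    refine ⟨(j, p), Finset.mem_univ _, ?_⟩
    simp only [twoStepsTensor, hij, hp, and_self, if_true, true_or, abs_one]
    norm_num

lemma repMatrix_pow_pos {n : ℕ} (hn : 2 ≤ n) {G : SimpleGraph (Fin n)} (hG : G.Connected) :
    ∀ (k : ℕ) (i j : Fin n), G.dist i j ≤ k →
      0 < ((repMatrix (twoStepsTensor G)) ^ (k + 1)) i j := by
  intro k
  induction k with
  | zero =>
    intro i j h
    have : i = j := hG.dist_eq_zero_iff.mp (Nat.le_zero.mp h)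
    subst this
    simpa using repMatrix_pos hn hG (Or.inl rfl)
  | succ k ih =>
    intro i j h
    rw [pow_succ', Matrix.mul_apply]
    by_cases hij : i = j
    · subst hij
      refine Finset.sum_pos' (fun m _ => mul_nonneg (repMatrix_nonneg _ _ _)
        (repMatrix_pow_nonneg _ _ _ _)) ⟨i, Finset.mem_univ _, ?_⟩
      exact mul_pos (repMatrix_pos hn hG (Or.inl rfl))
        (ih i i (by simp [hG.dist_eq_zero_iff.mpr rfl]))
    · obtain ⟨w, hw⟩ := hG.exists_walk_length_eq_dist i j
      cases w with
      | nil => exact absurd rfl hij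
      | @cons _ m _ ha q =>
        refine Finset.sum_pos' (fun m _ => mul_nonneg (repMatrix_nonneg _ _ _)
          (repMatrix_pow_nonneg _ _ _ _)) ⟨m, Finset.mem_univ _, ?_⟩
        refine mul_pos (repMatrix_pos hn hG (Or.inr ha)) (ih m j ?_)
        have := SimpleGraph.dist_le q
        simp only [SimpleGraph.Walk.length_cons] at hw
        omega

/-- For a connected simple graph on `n ≥ 2` vertices, the representative matrix of its
two-steps tensor is primitive. -/
theorem repMatrix_twoStepsTensor_primitive {n : ℕ} (hn : 2 ≤ n)
    (G : SimpleGraph (Fin n)) (hG : G.Connected) :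
    ∃ k : ℕ, 0 < k ∧ ∀ i j : Fin n, 0 < ((repMatrix (twoStepsTensor G)) ^ k) i j := by
  classical
  set D : ℕ := Finset.sup Finset.univ (fun p : Fin n × Fin n => G.dist p.1 p.2) with hD
  refine ⟨D + 1, Nat.succ_pos _, fun i j => ?_⟩
  exact repMatrix_pow_pos hn hG D i j
    (Finset.le_sup (f := fun p : Fin n × Fin n => G.dist p.1 p.2) (Finset.mem_univ (i, j)))
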